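/- Let (Ω, F, P) be a probability space and ψ : Ω → ℝ a measurable function with ∫ e^ψ dP < ∞. Then ln ∫ e^ψ dP = sup over all probability measures Q on (Ω, F) that are absolutely continuous with respect to P, have finite Kullback–Leibler divergence KL(Q‖P), and for which ψ is Q-integrable, of the quantity ∫ ψ dQ − KL(Q‖P). -/

import Mathlib

open MeasureTheory

/-- The Kullback-Leibler divergence of `Q` with respect to `P`,
`KL(Q‖P) = ∫ ln(dQ/dP) dQ`. -/
noncomputable def KLdiv {Ω : Type*} [MeasurableSpace Ω] (Q P : Measure Ω) : ℝ :=
  ∫ ω, Real.log ((Q.rnDeriv P ω).toReal) ∂Q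

section Aux

open Real Filter Set
open scoped ENNReal

variable {Ω : Type*} [MeasurableSpace Ω]

/-- Upper bound: the Gibbs / Donsker–Varadhan inequality. -/
lemma gibbs_upper (P : Measure Ω) [IsProbabilityMeasure P] (ψ : Ω → ℝ) (hψ : Measurable ψ)
    (hint : Integrable (fun ω => Real.exp (ψ ω)) P)
    (Q : Measure Ω) (hQprob : IsProbabilityMeasure Q) (hQP : Q ≪ P)
    (hKL : Integrable (fun ω => Real.log ((Q.rnDeriv P ω).toReal)) Q)
    (hψQ : Integrable ψ Q) :
    (∫ ω, ψ ω ∂Q) - KLdiv Q P ≤ Real.log (∫ ω, Real.exp (ψ ω) ∂P) := by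
  haveI := hQprob
  set Z : ℝ := ∫ ω, Real.exp (ψ ω) ∂P with hZdef
  have hZ : 0 < Z := integral_exp_pos hint
  set ρ : Ω → ℝ := fun ω => (Q.rnDeriv P ω).toReal with hρdef
  have hρ_meas : Measurable ρ := (Measure.measurable_rnDeriv Q P).ennreal_toReal
  have hρ_pos : ∀ᵐ ω ∂Q, 0 < ρ ω := by
    filter_upwards [Measure.rnDeriv_pos hQP, hQP.ae_le (Measure.rnDeriv_lt_top Q P)]
      with ω h1 h2
    exact ENNReal.toReal_pos h1.ne' h2.ne
  set h : Ω → ℝ := fun ω => Real.exp (ψ ω) / (ρ ω * Z) with hhdef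
  have hh_meas : Measurable h := (hψ.exp).div (hρ_meas.mul measurable_const)
  have hint' : Integrable (fun ω => Real.exp (ψ ω) / Z) P := hint.div_const Z
  have hbound : ∀ ω, ρ ω * h ω ≤ Real.exp (ψ ω) / Z := by
    intro ω
    rcases eq_or_lt_of_le (ENNReal.toReal_nonneg : (0:ℝ) ≤ ρ ω) with h0 | h0
    · rw [show ρ ω = 0 from h0.symm, zero_mul]
      positivity
    · have hne : ρ ω ≠ 0 := h0.ne'
      have heq : ρ ω * h ω = Real.exp (ψ ω) / Z := by
        show ρ ω * (Real.exp (ψ ω) / (ρ ω * Z)) = Real.exp (ψ ω) / Z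
        field_simp
      rw [heq]
  have hρh_nonneg : ∀ ω, 0 ≤ ρ ω * h ω := by
    intro ω
    have : 0 ≤ h ω := by positivity
    exact mul_nonneg ENNReal.toReal_nonneg this
  have hρh_int : Integrable (fun ω => ρ ω * h ω) P := by
    refine Integrable.mono' hint' ((hρ_meas.mul hh_meas).aestronglyMeasurable) ?_
    refine Filter.Eventually.of_forall fun ω => ?_
    rw [Real.norm_eq_abs, abs_of_nonneg (hρh_nonneg ω)]
    exact hbound ω
  have hint_hQ : Integrable h Q := by
    rw [← Measure.withDensity_rnDeriv_eq Q P hQP]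
    rw [integrable_withDensity_iff (Measure.measurable_rnDeriv Q P)
      (Measure.rnDeriv_lt_top Q P)]
    simpa [mul_comm] using hρh_int
  have hInthQ : ∫ ω, h ω ∂Q ≤ 1 := by
    have heq : ∫ ω, h ω ∂Q = ∫ ω, ρ ω * h ω ∂P := by
      rw [← integral_rnDeriv_smul hQP (f := h)]
      simp [smul_eq_mul, hρdef]
    rw [heq]
    calc ∫ ω, ρ ω * h ω ∂P ≤ ∫ ω, Real.exp (ψ ω) / Z ∂P :=
          integral_mono hρh_int hint' hbound
      _ = Z / Z := by rw [integral_div]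
      _ = 1 := div_self hZ.ne'
  -- pointwise inequality
  have hkey : ∀ᵐ ω ∂Q, ψ ω - Real.log (ρ ω) - Real.log Z ≤ h ω - 1 := by
    filter_upwards [hρ_pos] with ω hω
    have hhpos : 0 < h ω := by
      have := hω
      rw [hhdef]
      positivity
    have hlog : Real.log (h ω) = ψ ω - Real.log (ρ ω) - Real.log Z := by
      rw [hhdef]
      simp only
      rw [Real.log_div (Real.exp_pos _).ne' (mul_pos hω hZ).ne', Real.log_exp,
        Real.log_mul hω.ne' hZ.ne', sub_add_eq_sub_sub]
    rw [← hlog]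
    exact Real.log_le_sub_one_of_pos hhpos
  have hlhs_int : Integrable (fun ω => ψ ω - Real.log (ρ ω) - Real.log Z) Q :=
    ((hψQ.sub hKL : Integrable (fun ω => ψ ω - Real.log (ρ ω)) Q)).sub (integrable_const _)
  have hrhs_int : Integrable (fun ω => h ω - 1) Q := hint_hQ.sub (integrable_const _)
  have hmono := integral_mono_ae hlhs_int hrhs_int hkey
  have h1 : Integrable (fun ω => ψ ω - Real.log (ρ ω)) Q := hψQ.sub hKL
  have hL : ∫ ω, (ψ ω - Real.log (ρ ω) - Real.log Z) ∂Q
      = (∫ ω, ψ ω ∂Q) - KLdiv Q P - Real.log Z := by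
    rw [integral_sub h1 (integrable_const _), integral_sub hψQ hKL,
      integral_const]
    simp [KLdiv, hρdef]
  have hR : ∫ ω, (h ω - 1) ∂Q = (∫ ω, h ω ∂Q) - 1 := by
    rw [integral_sub hint_hQ (integrable_const _), integral_const]
    simp
  rw [hL, hR] at hmono
  linarith

/-- Existence of the restricted Gibbs measure attaining `log` of the partial
normalization constant. -/
lemma exists_gibbs (P : Measure Ω) [IsProbabilityMeasure P] (ψ : Ω → ℝ) (hψ : Measurable ψ)
    {A : Set Ω} (hA : MeasurableSet A) (c : ℝ) (hbd : ∀ ω ∈ A, |ψ ω| ≤ c)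
    (hZn : 0 < ∫ ω, Set.indicator A (fun ω => Real.exp (ψ ω)) ω ∂P) :
    ∃ Q : Measure Ω, (IsProbabilityMeasure Q ∧ Q ≪ P ∧
      Integrable (fun ω => Real.log ((Q.rnDeriv P ω).toReal)) Q ∧ Integrable ψ Q) ∧
      (∫ ω, ψ ω ∂Q) - KLdiv Q P
        = Real.log (∫ ω, Set.indicator A (fun ω => Real.exp (ψ ω)) ω ∂P) := by
  set g : Ω → ℝ := Set.indicator A (fun ω => Real.exp (ψ ω)) with hgdef
  set Zn : ℝ := ∫ ω, g ω ∂P with hZndef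
  have hZnpos : 0 < Zn := hZn
  have hg_meas : Measurable g := (hψ.exp).indicator hA
  have hg_nonneg : ∀ ω, 0 ≤ g ω := fun ω =>
    Set.indicator_nonneg (fun ω _ => (Real.exp_pos _).le) ω
  have hg_int : Integrable g P := by
    refine Integrable.mono' (integrable_const (Real.exp c)) hg_meas.aestronglyMeasurable ?_
    refine Filter.Eventually.of_forall fun ω => ?_
    rw [Real.norm_eq_abs, abs_of_nonneg (hg_nonneg ω)]
    by_cases hω : ω ∈ A
    · rw [hgdef, Set.indicator_of_mem hω]
      exact Real.exp_le_exp.2 ((abs_le.1 (hbd ω hω)).2)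
    · rw [hgdef, Set.indicator_of_notMem hω]
      positivity
  set f : Ω → ℝ≥0∞ := fun ω => ENNReal.ofReal (g ω / Zn) with hfdef
  have hf_meas : Measurable f := (hg_meas.div_const _).ennreal_ofReal
  set Q : Measure Ω := P.withDensity f with hQdef
  have hQP : Q ≪ P := withDensity_absolutelyContinuous _ _
  have hQuniv : Q Set.univ = 1 := by
    rw [hQdef, withDensity_apply _ MeasurableSet.univ, Measure.restrict_univ, hfdef]
    rw [← ofReal_integral_eq_lintegral_ofReal (hg_int.div_const _)
      (Filter.Eventually.of_forall fun ω => div_nonneg (hg_nonneg ω) hZnpos.le)]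
    rw [integral_div, ← hZndef, div_self hZnpos.ne']
    simp
  have hQprob : IsProbabilityMeasure Q := ⟨hQuniv⟩
  haveI := hQprob
  have hrn : f =ᵐ[Q] Q.rnDeriv P :=
    hQP.ae_le (Measure.rnDeriv_withDensity P hf_meas).symm
  have hQA : ∀ᵐ ω ∂Q, ω ∈ A := by
    have hcompl : Q Aᶜ = 0 := by
      rw [hQdef, withDensity_apply _ hA.compl]
      have hzero : ∀ᵐ ω ∂P, ω ∈ Aᶜ → f ω = 0 :=
        Filter.Eventually.of_forall (fun ω hω => by
          rw [hfdef]
          simp [hgdef, Set.indicator_of_notMem hω])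
      rw [setLIntegral_congr_fun_ae hA.compl hzero]
      simp
    rw [ae_iff]
    exact hcompl
  have hkey : ∀ᵐ ω ∂Q, Real.log ((Q.rnDeriv P ω).toReal) = ψ ω - Real.log Zn := by
    filter_upwards [hrn, hQA] with ω hω hmem
    rw [← hω, hfdef]
    simp only
    rw [ENNReal.toReal_ofReal (div_nonneg (hg_nonneg ω) hZnpos.le)]
    rw [hgdef, Set.indicator_of_mem hmem]
    rw [Real.log_div (Real.exp_pos _).ne' hZnpos.ne', Real.log_exp]
  have hψQ : Integrable ψ Q := by
    refine Integrable.mono' (integrable_const c) hψ.aestronglyMeasurable ?_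
    filter_upwards [hQA] with ω hmem
    exact hbd ω hmem
  have hKLint : Integrable (fun ω => Real.log ((Q.rnDeriv P ω).toReal)) Q := by
    refine Integrable.mono' (integrable_const (c + |Real.log Zn|))
      (Real.measurable_log.comp
        ((Measure.measurable_rnDeriv Q P).ennreal_toReal)).aestronglyMeasurable ?_
    filter_upwards [hkey, hQA] with ω hω hmem
    rw [hω, Real.norm_eq_abs]
    calc |ψ ω - Real.log Zn| ≤ |ψ ω| + |Real.log Zn| := abs_sub _ _
      _ ≤ c + |Real.log Zn| := by have := hbd ω hmem; linarith
  refine ⟨Q, ⟨hQprob, hQP, hKLint, hψQ⟩, ?_⟩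
  have hKLeq : KLdiv Q P = (∫ ω, ψ ω ∂Q) - Real.log Zn := by
    rw [KLdiv, integral_congr_ae hkey, integral_sub hψQ (integrable_const _), integral_const]
    simp
  rw [hKLeq]
  ring

end Aux

/-- Free Energy-Entropy Duality: the free energy `ln ∫ e^ψ dP` equals the supremum,
over probability measures `Q ≪ P` with finite KL divergence and `ψ` `Q`-integrable,
of `∫ ψ dQ − KL(Q‖P)`. -/
theorem free_energy_entropy_duality {Ω : Type*} [MeasurableSpace Ω]
    (P : Measure Ω) [IsProbabilityMeasure P] (ψ : Ω → ℝ) (hψ : Measurable ψ)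
    (hint : Integrable (fun ω => Real.exp (ψ ω)) P) :
    Real.log (∫ ω, Real.exp (ψ ω) ∂P) =
      ⨆ Q : {Q : Measure Ω // IsProbabilityMeasure Q ∧ Q ≪ P ∧
          Integrable (fun ω => Real.log ((Q.rnDeriv P ω).toReal)) Q ∧
          Integrable ψ Q},
        ((∫ ω, ψ ω ∂(Q : Measure Ω)) - KLdiv (Q : Measure Ω) P) := by
  classical
  set Z : ℝ := ∫ ω, Real.exp (ψ ω) ∂P with hZdef
  have hZ : 0 < Z := integral_exp_pos hint
  set A : ℕ → Set Ω := fun n => {ω | |ψ ω| ≤ (n : ℝ)} with hAdef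
  have hA_meas : ∀ n, MeasurableSet (A n) := fun n =>
    measurableSet_le hψ.abs measurable_const
  set Zseq : ℕ → ℝ := fun n => ∫ ω, Set.indicator (A n) (fun ω => Real.exp (ψ ω)) ω ∂P
    with hZseqdef
  have htend : Filter.Tendsto Zseq Filter.atTop (nhds Z) := by
    refine tendsto_integral_of_dominated_convergence (fun ω => Real.exp (ψ ω))
      (fun n => ((hψ.exp).indicator (hA_meas n)).aestronglyMeasurable) hint
      (fun n => Filter.Eventually.of_forall fun ω => ?_)
      (Filter.Eventually.of_forall fun ω => ?_)
    · rw [Real.norm_eq_abs,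
        abs_of_nonneg (Set.indicator_nonneg (fun ω _ => (Real.exp_pos _).le) ω)]
      exact Set.indicator_le_self' (fun ω _ => (Real.exp_pos _).le) ω
    · obtain ⟨n₀, hn₀⟩ := exists_nat_ge |ψ ω|
      refine Filter.Tendsto.congr' ?_ tendsto_const_nhds
      filter_upwards [Filter.eventually_ge_atTop n₀] with n hn
      have : ω ∈ A n := by
        show |ψ ω| ≤ (n : ℝ)
        exact le_trans hn₀ (Nat.cast_le.mpr hn)
      exact (Set.indicator_of_mem this (fun ω => Real.exp (ψ ω))).symm
  have hev : ∀ᶠ n in Filter.atTop, 0 < Zseq n := htend.eventually_const_lt hZ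
  -- nonempty index
  obtain ⟨n₀, hn₀⟩ := hev.exists
  obtain ⟨Q₀, hQ₀, _⟩ := exists_gibbs P ψ hψ (hA_meas n₀) n₀ (fun ω hω => hω) hn₀
  haveI hne : Nonempty {Q : Measure Ω // IsProbabilityMeasure Q ∧ Q ≪ P ∧
      Integrable (fun ω => Real.log ((Q.rnDeriv P ω).toReal)) Q ∧
      Integrable ψ Q} := ⟨⟨Q₀, hQ₀⟩⟩
  have hbdd : BddAbove (Set.range fun Q : {Q : Measure Ω // IsProbabilityMeasure Q ∧ Q ≪ P ∧
      Integrable (fun ω => Real.log ((Q.rnDeriv P ω).toReal)) Q ∧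
      Integrable ψ Q} => ((∫ ω, ψ ω ∂(Q : Measure Ω)) - KLdiv (Q : Measure Ω) P)) := by
    refine ⟨Real.log Z, ?_⟩
    rintro x ⟨⟨Q, hQ1, hQ2, hQ3, hQ4⟩, rfl⟩
    exact gibbs_upper P ψ hψ hint Q hQ1 hQ2 hQ3 hQ4
  refine le_antisymm ?_ ?_
  · -- log Z ≤ sup, via log Zseq n → log Z and log Zseq n ≤ sup eventually
    have hlogtend : Filter.Tendsto (fun n => Real.log (Zseq n)) Filter.atTop
        (nhds (Real.log Z)) := (Real.continuousAt_log hZ.ne').tendsto.comp htend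
    refine le_of_tendsto hlogtend ?_
    filter_upwards [hev] with n hn
    obtain ⟨Q, hQ, hval⟩ := exists_gibbs P ψ hψ (hA_meas n) n (fun ω hω => hω) hn
    calc Real.log (Zseq n) = (∫ ω, ψ ω ∂Q) - KLdiv Q P := hval.symm
      _ ≤ _ := le_ciSup hbdd ⟨Q, hQ⟩
  · refine ciSup_le ?_
    rintro ⟨Q, hQ1, hQ2, hQ3, hQ4⟩
    exact gibbs_upper P ψ hψ hint Q hQ1 hQ2 hQ3 hQ4
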